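/- Let T ≺ T' be two s-decreasing trees in the s-weak order. Then there exists a tree-ascent (a,c) of T such that card_{T'}(c,a) > card_T(c,a). -/

import Mathlib

/-- Planar rooted trees: leaves are unlabeled; internal nodes carry a natural
number label and an ordered list of children. -/
inductive STree : Type where
  | leaf : STree
  | node : ℕ → List STree → STree

namespace STree

mutual
  /-- `x` occurs as the label of an internal node of the tree. -/
  def mem (x : ℕ) : STree → Bool
    | .leaf => false
    | .node a cs => x == a || memL x cs
  def memL (x : ℕ) : List STree → Bool
    | [] => false
    | t :: ts => mem x t || memL x ts
end

mutual
  /-- The list of internal node labels, in preorder. -/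
  def labels : STree → List ℕ
    | .leaf => []
    | .node a cs => a :: labelsL cs
  def labelsL : List STree → List ℕ
    | [] => []
    | t :: ts => labels t ++ labelsL ts
end

mutual
  /-- Local well-formedness for the signature `s` : an internal node labeled `a`
  has `s a + 1` children, and all labels below it are smaller than `a`. -/
  def wf (s : ℕ → ℕ) : STree → Prop
    | .leaf => True
    | .node a cs => cs.length = s a + 1 ∧ (∀ b ∈ labelsL cs, b < a) ∧ wfL s cs
  def wfL (s : ℕ → ℕ) : List STree → Prop
    | [] => True
    | t :: ts => wf s t ∧ wfL s ts
end

/-- `T` is an `s`-decreasing tree: its internal nodes are labeled bijectively by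
`1, …, n`, node `i` has `s i + 1` ordered children, and all descendants of a node
have smaller labels. -/
def IsSDecreasingTree (n : ℕ) (s : ℕ → ℕ) (T : STree) : Prop :=
  wf s T ∧ (labels T).Perm (List.range' 1 n)

/-- Index of the first tree of the list containing the label `x`. -/
def idxOf (x : ℕ) : List STree → ℕ
  | [] => 0
  | t :: ts => if mem x t then 0 else idxOf x ts + 1

mutual
  /-- The cardinality `card_T(y,x)` of the pair `(y,x)` in the tree:
  `0` if `x` is (weakly) left of `y`, `i` if `x` lies in the `i`-th child
  subtree of `y`, and `s y` if `x` is right of `y`. -/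
  def card (s : ℕ → ℕ) (y x : ℕ) : STree → ℕ
    | .leaf => 0
    | .node a cs => if a = y then idxOf x cs else cardL s y x cs
  def cardL (s : ℕ → ℕ) (y x : ℕ) : List STree → ℕ
    | [] => 0
    | t :: ts =>
      if mem y t then
        (if mem x t then card s y x t else if memL x ts then s y else 0)
      else (if mem x t then 0 else cardL s y x ts)
end

/-- The tree-inversion multiset of `T`, as a multiplicity function on pairs
`(y,x)` with `1 ≤ x < y ≤ n`. -/
def treeInv (n : ℕ) (s : ℕ → ℕ) (T : STree) : ℕ → ℕ → ℕ := fun y x =>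
  if 1 ≤ x ∧ x < y ∧ y ≤ n then card s y x T else 0

/-- A multi inversion set on `1, …, n` bounded by the weak composition `s`. -/
def IsMultiInvSet (n : ℕ) (s : ℕ → ℕ) (I : ℕ → ℕ → ℕ) : Prop :=
  (∀ y x, I y x ≤ s y) ∧ ∀ y x, ¬(1 ≤ x ∧ x < y ∧ y ≤ n) → I y x = 0

/-- Transitivity: for `a < b < c`, `card(c,b) = i` implies `card(b,a) = 0` or
`card(c,a) ≥ i`. -/
def InvTransitive (I : ℕ → ℕ → ℕ) : Prop :=
  ∀ a b c : ℕ, a < b → b < c → I b a = 0 ∨ I c b ≤ I c a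

/-- Planarity: for `a < b < c`, `card(c,a) = i` implies `card(b,a) = s b` or
`card(c,b) ≥ i`. -/
def InvPlanar (s : ℕ → ℕ) (I : ℕ → ℕ → ℕ) : Prop :=
  ∀ a b c : ℕ, a < b → b < c → I b a = s b ∨ I c a ≤ I c b

/-- An `s`-tree-inversion set: a bounded multi inversion set that is transitive
and planar. -/
def IsTreeInvSet (n : ℕ) (s : ℕ → ℕ) (I : ℕ → ℕ → ℕ) : Prop :=
  IsMultiInvSet n s I ∧ InvTransitive I ∧ InvPlanar s I

/-- Inclusion of multi inversion sets: pointwise comparison of multiplicities. -/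
def invLE (I J : ℕ → ℕ → ℕ) : Prop := ∀ y x, I y x ≤ J y x

/-- The `s`-weak order: inclusion of tree-inversion multisets. -/
def sWeakLE (n : ℕ) (s : ℕ → ℕ) (T R : STree) : Prop :=
  invLE (treeInv n s T) (treeInv n s R)

/-- Union of multi inversion sets: pointwise maximum. -/
def invUnion (I J : ℕ → ℕ → ℕ) : ℕ → ℕ → ℕ := fun y x => max (I y x) (J y x)

/-- Transitive closure: `tc I (c,a)` is the maximal value of `I (b₁, b₂)` over
all transitivity paths `c = b₁ > b₂ > … > b_k = a` (consecutive entries have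
positive multiplicity). -/
noncomputable def tc (I : ℕ → ℕ → ℕ) : ℕ → ℕ → ℕ := fun c a =>
  sSup {v | ∃ (b : ℕ) (l : List ℕ),
    List.Chain (fun u w => w < u ∧ 0 < I u w) c (b :: l) ∧
    (b :: l).getLast (List.cons_ne_nil b l) = a ∧ v = I c b}

/-- Adding the inversion `(c,a)`: increase its multiplicity by one. -/
def addInv (I : ℕ → ℕ → ℕ) (c a : ℕ) : ℕ → ℕ → ℕ := fun y x =>
  if y = c ∧ x = a then I y x + 1 else I y x

mutual
  /-- `a` is a (proper) descendant of the node labeled `c`. -/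
  def descIn (c a : ℕ) : STree → Bool
    | .leaf => false
    | .node b cs => (b == c && memL a cs) || descInL c a cs
  def descInL (c a : ℕ) : List STree → Bool
    | [] => false
    | t :: ts => descIn c a t || descInL c a ts
end

mutual
  /-- `a` belongs to the rightmost child subtree of the node labeled `c`. -/
  def inRight (c a : ℕ) : STree → Bool
    | .leaf => false
    | .node b cs =>
      (b == c && (match cs.getLast? with
        | some t => mem a t
        | none => false)) || inRightL c a cs
  def inRightL (c a : ℕ) : List STree → Bool
    | [] => false
    | t :: ts => inRight c a t || inRightL c a ts
end

mutual
  /-- `a` belongs to the leftmost child subtree of the node labeled `c`. -/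
  def inLeft (c a : ℕ) : STree → Bool
    | .leaf => false
    | .node b cs =>
      (b == c && (match cs.head? with
        | some t => mem a t
        | none => false)) || inLeftL c a cs
  def inLeftL (c a : ℕ) : List STree → Bool
    | [] => false
    | t :: ts => inLeft c a t || inLeftL c a ts
end

mutual
  /-- The rightmost child subtree of the node labeled `a` is empty (a leaf). -/
  def rightEmpty (a : ℕ) : STree → Bool
    | .leaf => false
    | .node b cs =>
      (b == a && (match cs.getLast? with
        | some .leaf => true
        | _ => false)) || rightEmptyL a cs
  def rightEmptyL (a : ℕ) : List STree → Bool
    | [] => false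
    | t :: ts => rightEmpty a t || rightEmptyL a ts
end

/-- `(a,c)` is a tree-ascent of `T`: `a` is a descendant of `c`, not in the
rightmost subtree of `c`; `a` lies in the rightmost subtree of any `b` with
`a < b < c` having `a` as a descendant; and if `s a > 0` the rightmost
(strict right) subtree of `a` is empty. -/
def IsTreeAscent (s : ℕ → ℕ) (T : STree) (a c : ℕ) : Prop :=
  a < c ∧ descIn c a T = true ∧ inRight c a T = false ∧
  (∀ b : ℕ, a < b → b < c → descIn b a T = true → inRight b a T = true) ∧
  (0 < s a → rightEmpty a T = true)

/-- `a` is the root label of the tree. -/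
def hasRoot (a : ℕ) : STree → Bool
  | .leaf => false
  | .node b _ => a == b

mutual
  /-- `a` is a direct child of the node `c`, but not its rightmost child. -/
  def nonRightChild (c a : ℕ) : STree → Bool
    | .leaf => false
    | .node b cs => (b == c && cs.dropLast.any (hasRoot a)) || nonRightChildL c a cs
  def nonRightChildL (c a : ℕ) : List STree → Bool
    | [] => false
    | t :: ts => nonRightChild c a t || nonRightChildL c a ts
end

/-- `(a,c)` is a Tamari-ascent of `T`: `a` is a non-right child of `c`. -/
def IsTamariAscent (T : STree) (a c : ℕ) : Prop :=
  a < c ∧ nonRightChild c a T = true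

mutual
  /-- Horizontal mirror image of a tree: the order of children is reversed at
  every internal node. -/
  def mirror : STree → STree
    | .leaf => .leaf
    | .node a cs => .node a (mirrorL cs)
  def mirrorL : List STree → List STree
    | [] => []
    | t :: ts => mirrorL ts ++ [mirror t]
end

/-- `T` is an `s`-Tamari tree: `card(c,a) ≤ card(c,b)` for all `a < b < c`. -/
def TamariProp (n : ℕ) (s : ℕ → ℕ) (T : STree) : Prop :=
  ∀ a b c : ℕ, a < b → b < c → treeInv n s T c a ≤ treeInv n s T c b

/-- `T` is an `s`-maximal-Tamari tree: `card(b,a) = s b` implies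
`card(c,a) = s c` for all `c > b`. -/
def MaxTamariProp (n : ℕ) (s : ℕ → ℕ) (T : STree) : Prop :=
  ∀ a b c : ℕ, 1 ≤ a → a < b → b < c → c ≤ n →
    treeInv n s T b a = s b → treeInv n s T c a = s c

/-- The projection `π↓` on inversion sets:
`card_Q(c,a) = min { card_T(c,b) : a ≤ b < c }`. -/
noncomputable def pidownInv (n : ℕ) (s : ℕ → ℕ) (T : STree) : ℕ → ℕ → ℕ :=
  fun c a => sInf {v | ∃ b : ℕ, a ≤ b ∧ b < c ∧ v = treeInv n s T c b}

open scoped Classical in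
/-- The projection `π↑` on inversion sets: `card_R(c,a) = s c` if there is
`a < b < c` with `card_T(b,a) = s b`, and `card_R(c,a) = card_T(c,a)` otherwise. -/
noncomputable def piupInv (n : ℕ) (s : ℕ → ℕ) (T : STree) : ℕ → ℕ → ℕ :=
  fun c a =>
    if 1 ≤ a ∧ a < c ∧ c ≤ n then
      if ∃ b : ℕ, a < b ∧ b < c ∧ treeInv n s T b a = s b then s c
      else treeInv n s T c a
    else 0

end STree

namespace STree

theorem idxOf_pos {x : ℕ} {t : STree} {ts : List STree} (h : mem x t = true) :
    idxOf x (t :: ts) = 0 := by simp [idxOf, h]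

theorem idxOf_neg {x : ℕ} {t : STree} {ts : List STree} (h : mem x t = false) :
    idxOf x (t :: ts) = idxOf x ts + 1 := by simp [idxOf, h]

theorem memL_cons {x : ℕ} {t : STree} {ts : List STree} :
    memL x (t :: ts) = true ↔ mem x t = true ∨ memL x ts = true := by
  simp [memL]

mutual
theorem mem_iff (x : ℕ) : ∀ t : STree, mem x t = true ↔ x ∈ labels t
  | .leaf => by simp [mem, labels]
  | .node a cs => by
      simp [mem, labels, memL_iff x cs, or_comm]
theorem memL_iff (x : ℕ) : ∀ ts : List STree, memL x ts = true ↔ x ∈ labelsL ts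
  | [] => by simp [memL, labelsL]
  | t :: ts => by simp [memL, labelsL, memL_iff x ts, mem_iff x t]
end

theorem wfL_of_mem {s : ℕ → ℕ} {cs : List STree} (h : wfL s cs) {t : STree}
    (ht : t ∈ cs) : wf s t := by
  induction cs with
  | nil => cases ht
  | cons u us ih =>
    rw [wfL] at h
    rw [List.mem_cons] at ht
    rcases ht with rfl | h1
    · exact h.1
    · exact ih h.2 h1

/-- Nodup of the label list of a forest. -/
def NDL (cs : List STree) : Prop := (labelsL cs).Nodup

def ND (t : STree) : Prop := (labels t).Nodup

theorem nd_node {a : ℕ} {cs : List STree} (h : ND (.node a cs)) :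
    memL a cs = false ∧ NDL cs := by
  rw [ND, labels, List.nodup_cons] at h
  refine ⟨?_, h.2⟩
  rw [← Bool.not_eq_true, memL_iff]; exact h.1

theorem ndL_cons {t : STree} {ts : List STree} (h : NDL (t :: ts)) :
    ND t ∧ NDL ts ∧ ∀ x, mem x t = true → memL x ts = false := by
  rw [NDL, labelsL, List.nodup_append] at h
  refine ⟨h.1, h.2.1, fun x hx => ?_⟩
  rw [← Bool.not_eq_true, memL_iff]
  exact fun hm => h.2.2 x ((mem_iff x t).1 hx) x hm rfl

theorem nd_of_mem {cs : List STree} (h : NDL cs) {t : STree} (ht : t ∈ cs) :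
    ND t := by
  induction cs with
  | nil => cases ht
  | cons u us ih =>
    rw [List.mem_cons] at ht
    rcases ht with rfl | h1
    · exact (ndL_cons h).1
    · exact ih (ndL_cons h).2.1 h1

theorem memL_of_mem {cs : List STree} {t : STree} (ht : t ∈ cs) {x : ℕ}
    (hx : mem x t = true) : memL x cs = true := by
  induction cs with
  | nil => cases ht
  | cons u us ih =>
    rw [List.mem_cons] at ht
    rcases ht with rfl | h1
    · simp [memL, hx]
    · simp [memL, ih h1]

/-- In a nodup forest, a label in `t ∈ cs` appears in no other member. -/
theorem mem_of_memL_nd {cs : List STree} (hnd : NDL cs) {t : STree} (ht : t ∈ cs)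
    {x : ℕ} (hx : mem x t = true) {u : STree} (hu : u ∈ cs)
    (hxu : mem x u = true) : t = u := by
  induction cs with
  | nil => cases ht
  | cons v vs ih =>
    obtain ⟨_, hnd', hdisj⟩ := ndL_cons hnd
    rw [List.mem_cons] at ht hu
    rcases ht with rfl | h1 <;> rcases hu with rfl | h2
    · rfl
    · have := hdisj x hx; rw [memL_of_mem h2 hxu] at this; cases this
    · have := hdisj x hxu; rw [memL_of_mem h1 hx] at this; cases this
    · exact ih hnd' h1 h2

theorem idxOf_lt_length {x : ℕ} {cs : List STree} (h : memL x cs = true) :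
    idxOf x cs < cs.length := by
  induction cs with
  | nil => simp [memL] at h
  | cons t ts ih =>
    rcases Bool.eq_false_or_eq_true (mem x t) with ht | ht
    · rw [idxOf_pos ht]; simp
    · rw [memL_cons] at h
      rcases h with h | h
      · rw [h] at ht; cases ht
      · rw [idxOf_neg ht, List.length_cons]
        exact Nat.succ_lt_succ (ih h)

theorem exists_mem_both_of_idx_eq {x y : ℕ} {cs : List STree}
    (hx : memL x cs = true) (hy : memL y cs = true)
    (h : idxOf x cs = idxOf y cs) : ∃ t ∈ cs, mem x t = true ∧ mem y t = true := by
  induction cs with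
  | nil => simp [memL] at hx
  | cons t ts ih =>
    rcases Bool.eq_false_or_eq_true (mem x t) with h1 | h1 <;>
      rcases Bool.eq_false_or_eq_true (mem y t) with h2 | h2
    · exact ⟨t, List.mem_cons_self, h1, h2⟩
    · rw [idxOf_pos h1, idxOf_neg h2] at h; cases h
    · rw [idxOf_neg h1, idxOf_pos h2] at h; cases h
    · rw [idxOf_neg h1, idxOf_neg h2, Nat.add_right_cancel_iff] at h
      rw [memL_cons] at hx hy
      rcases hx with hx | hx; · rw [hx] at h1; cases h1
      rcases hy with hy | hy; · rw [hy] at h2; cases h2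
      obtain ⟨u, hu, h3, h4⟩ := ih hx hy h
      exact ⟨u, List.mem_cons_of_mem _ hu, h3, h4⟩

theorem idx_eq_of_mem_same {cs : List STree} (hnd : NDL cs) {t : STree}
    (ht : t ∈ cs) {x y : ℕ} (hx : mem x t = true) (hy : mem y t = true) :
    idxOf x cs = idxOf y cs := by
  induction cs with
  | nil => cases ht
  | cons u us ih =>
    obtain ⟨_, hnd', hdisj⟩ := ndL_cons hnd
    rw [List.mem_cons] at ht
    rcases ht with rfl | h1
    · rw [idxOf_pos hx, idxOf_pos hy]
    · have hx' : mem x u = false := by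
        rcases Bool.eq_false_or_eq_true (mem x u) with h | h
        · have := hdisj x h; rw [memL_of_mem h1 hx] at this; cases this
        · exact h
      have hy' : mem y u = false := by
        rcases Bool.eq_false_or_eq_true (mem y u) with h | h
        · have := hdisj y h; rw [memL_of_mem h1 hy] at this; cases this
        · exact h
      rw [idxOf_neg hx', idxOf_neg hy', ih hnd' h1]

end STree
namespace STree

mutual
/-- The subtree rooted at the node labeled `a`. -/
def subAt (a : ℕ) : STree → Option STree
  | .leaf => none
  | .node b cs => if a = b then some (.node b cs) else subAtL a cs
def subAtL (a : ℕ) : List STree → Option STree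
  | [] => none
  | t :: ts => if mem a t then subAt a t else subAtL a ts
end

mutual
theorem subAt_shape {a : ℕ} : ∀ {T : STree} {u : STree}, subAt a T = some u →
    ∃ cs, u = .node a cs
  | .leaf, u => by simp [subAt]
  | .node b cs, u => by
    rw [subAt]
    split
    · rename_i h; subst h; intro h2; exact ⟨cs, (Option.some_inj.1 h2).symm⟩
    · exact subAtL_shape
theorem subAtL_shape {a : ℕ} : ∀ {ts : List STree} {u : STree},
    subAtL a ts = some u → ∃ cs, u = .node a cs
  | [], u => by simp [subAtL]
  | t :: ts, u => by
    rw [subAtL]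
    split
    · exact subAt_shape
    · exact subAtL_shape
end

mutual
theorem subAt_of_mem {a : ℕ} : ∀ {T : STree}, mem a T = true →
    ∃ u, subAt a T = some u
  | .leaf => by simp [mem]
  | .node b cs => by
    intro h
    rw [subAt]
    split
    · exact ⟨_, rfl⟩
    · rename_i hne
      rw [mem, Bool.or_eq_true, beq_iff_eq] at h
      rcases h with h | h
      · exact absurd h hne
      · exact subAtL_of_mem h
theorem subAtL_of_mem {a : ℕ} : ∀ {ts : List STree}, memL a ts = true →
    ∃ u, subAtL a ts = some u
  | [] => by simp [memL]
  | t :: ts => by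
    intro h
    rw [subAtL]
    split
    · exact subAt_of_mem (by assumption)
    · rename_i hne
      rw [memL_cons] at h
      rcases h with h | h
      · exact absurd h (by simpa using hne)
      · exact subAtL_of_mem h
end

theorem subAt_node {a : ℕ} {T : STree} (h : mem a T = true) :
    ∃ cs, subAt a T = some (.node a cs) := by
  obtain ⟨u, hu⟩ := subAt_of_mem h
  obtain ⟨cs, rfl⟩ := subAt_shape hu
  exact ⟨cs, hu⟩

mutual
theorem mem_of_subAt {a x : ℕ} : ∀ {T : STree} {u : STree}, subAt a T = some u →
    mem x u = true → mem x T = true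
  | .leaf, u => by simp [subAt]
  | .node b cs, u => by
    rw [subAt]
    split
    · intro h hx; obtain rfl := Option.some_inj.1 h; exact hx
    · intro h hx
      rw [mem, Bool.or_eq_true]
      exact Or.inr (memL_of_subAtL h hx)
theorem memL_of_subAtL {a x : ℕ} : ∀ {ts : List STree} {u : STree},
    subAtL a ts = some u → mem x u = true → memL x ts = true
  | [], u => by simp [subAtL]
  | t :: ts, u => by
    rw [subAtL]
    split
    · intro h hx
      rw [memL_cons]
      exact Or.inl (mem_of_subAt h hx)
    · intro h hx
      rw [memL_cons]
      exact Or.inr (memL_of_subAtL h hx)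
end

theorem mem_self_subAt {a : ℕ} {T u : STree} (h : subAt a T = some u) :
    mem a u = true := by
  obtain ⟨cs, rfl⟩ := subAt_shape h
  simp [mem]

theorem mem_of_subAt' {a : ℕ} {T u : STree} (h : subAt a T = some u) :
    mem a T = true := mem_of_subAt h (mem_self_subAt h)

theorem subAtL_eq {cs : List STree} (hnd : NDL cs) {t : STree} (ht : t ∈ cs)
    {a : ℕ} (ha : mem a t = true) : subAtL a cs = subAt a t := by
  induction cs with
  | nil => cases ht
  | cons u us ih =>
    obtain ⟨_, hnd', hdisj⟩ := ndL_cons hnd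
    rw [List.mem_cons] at ht
    rcases ht with rfl | h1
    · rw [subAtL, if_pos ha]
    · have h2 : mem a u = false := by
        rcases Bool.eq_false_or_eq_true (mem a u) with h | h
        · have := hdisj a h; rw [memL_of_mem h1 ha] at this; cases this
        · exact h
      rw [subAtL, if_neg (by simp [h2]), ih hnd' h1]

mutual
theorem wf_subAt {s : ℕ → ℕ} {a : ℕ} : ∀ {T : STree} {u : STree}, wf s T →
    subAt a T = some u → wf s u
  | .leaf, u => by simp [subAt]
  | .node b cs, u => by
    intro hwf
    rw [subAt]
    split
    · intro h; rw [← Option.some_inj.1 h]; exact hwf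
    · intro h
      rw [wf] at hwf
      exact wfL_subAtL hwf.2.2 h
theorem wfL_subAtL {s : ℕ → ℕ} {a : ℕ} : ∀ {ts : List STree} {u : STree},
    wfL s ts → subAtL a ts = some u → wf s u
  | [], u => by simp [subAtL]
  | t :: ts, u => by
    intro hwf
    rw [wfL] at hwf
    rw [subAtL]
    split
    · exact wf_subAt hwf.1
    · exact wfL_subAtL hwf.2
end

mutual
theorem nd_subAt {a : ℕ} : ∀ {T : STree} {u : STree}, ND T →
    subAt a T = some u → ND u
  | .leaf, u => by simp [subAt]
  | .node b cs, u => by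
    intro hnd
    rw [subAt]
    split
    · intro h; rw [← Option.some_inj.1 h]; exact hnd
    · intro h
      exact ndL_subAtL (nd_node hnd).2 h
theorem ndL_subAtL {a : ℕ} : ∀ {ts : List STree} {u : STree}, NDL ts →
    subAtL a ts = some u → ND u
  | [], u => by simp [subAtL]
  | t :: ts, u => by
    intro hnd
    obtain ⟨h1, h2, _⟩ := ndL_cons hnd
    rw [subAtL]
    split
    · exact nd_subAt h1
    · exact ndL_subAtL h2
end

mutual
theorem subAt_trans {b x : ℕ} : ∀ {T : STree} {tb : STree}, ND T →
    subAt b T = some tb → mem x tb = true → subAt x T = subAt x tb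
  | .leaf, tb => by simp [subAt]
  | .node r cs, tb => by
    intro hnd h hx
    rw [subAt] at h
    split at h
    · obtain rfl := Option.some_inj.1 h; rfl
    · rename_i hne
      have hxT : memL x cs = true := memL_of_subAtL h hx
      have hxr : x ≠ r := by
        rintro rfl
        rw [(nd_node hnd).1] at hxT; cases hxT
      rw [subAt, if_neg hxr]
      exact subAtL_trans (nd_node hnd).2 h hx
theorem subAtL_trans {b x : ℕ} : ∀ {ts : List STree} {tb : STree}, NDL ts →
    subAtL b ts = some tb → mem x tb = true → subAtL x ts = subAt x tb
  | [], tb => by simp [subAtL]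
  | t :: ts, tb => by
    intro hnd h hx
    obtain ⟨hndt, hnd', hdisj⟩ := ndL_cons hnd
    rw [subAtL] at h
    split at h
    · rename_i hbt
      have hxt : mem x t = true := mem_of_subAt h hx
      rw [subAtL, if_pos hxt]
      exact subAt_trans hndt h hx
    · rename_i hbt
      have hxts : memL x ts = true := memL_of_subAtL h hx
      have hxt : mem x t = false := by
        rcases Bool.eq_false_or_eq_true (mem x t) with h2 | h2
        · rw [hdisj x h2] at hxts; cases hxts
        · exact h2
      rw [subAtL, if_neg (by simp [hxt])]
      exact subAtL_trans hnd' h hx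
end

theorem descInL_exists {c x : ℕ} {cs : List STree} :
    descInL c x cs = true ↔ ∃ t ∈ cs, descIn c x t = true := by
  induction cs with
  | nil => simp [descInL]
  | cons t ts ih =>
    rw [descInL, Bool.or_eq_true, ih]
    constructor
    · rintro (h | ⟨u, hu, h⟩)
      · exact ⟨t, List.mem_cons_self, h⟩
      · exact ⟨u, List.mem_cons_of_mem _ hu, h⟩
    · rintro ⟨u, hu, h⟩
      rw [List.mem_cons] at hu
      rcases hu with rfl | hu
      · exact Or.inl h
      · exact Or.inr ⟨u, hu, h⟩

mutual
theorem desc_mem {c x : ℕ} : ∀ {T : STree}, descIn c x T = true →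
    mem c T = true ∧ mem x T = true
  | .leaf => by simp [descIn]
  | .node b cs => by
    intro h
    rw [descIn, Bool.or_eq_true, Bool.and_eq_true, beq_iff_eq] at h
    rcases h with ⟨rfl, h⟩ | h
    · constructor
      · simp [mem]
      · rw [mem, Bool.or_eq_true]; exact Or.inr h
    · obtain ⟨h1, h2⟩ := descL_mem h
      rw [mem, Bool.or_eq_true, mem, Bool.or_eq_true]
      exact ⟨Or.inr h1, Or.inr h2⟩
theorem descL_mem {c x : ℕ} : ∀ {ts : List STree}, descInL c x ts = true →
    memL c ts = true ∧ memL x ts = true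
  | [] => by simp [descInL]
  | t :: ts => by
    intro h
    rw [descInL, Bool.or_eq_true] at h
    rw [memL_cons, memL_cons]
    rcases h with h | h
    · obtain ⟨h1, h2⟩ := desc_mem h
      exact ⟨Or.inl h1, Or.inl h2⟩
    · obtain ⟨h1, h2⟩ := descL_mem h
      exact ⟨Or.inr h1, Or.inr h2⟩
end

mutual
theorem descIn_lt {s : ℕ → ℕ} {c x : ℕ} : ∀ {T : STree}, wf s T →
    descIn c x T = true → x < c
  | .leaf => by simp [descIn]
  | .node b cs => by
    intro hwf h
    rw [descIn, Bool.or_eq_true, Bool.and_eq_true, beq_iff_eq] at h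
    rw [wf] at hwf
    rcases h with ⟨rfl, h⟩ | h
    · exact hwf.2.1 x ((memL_iff x cs).1 h)
    · exact descInL_lt hwf.2.2 h
theorem descInL_lt {s : ℕ → ℕ} {c x : ℕ} : ∀ {ts : List STree}, wfL s ts →
    descInL c x ts = true → x < c
  | [] => by simp [descInL]
  | t :: ts => by
    intro hwf h
    rw [wfL] at hwf
    rw [descInL, Bool.or_eq_true] at h
    rcases h with h | h
    · exact descIn_lt hwf.1 h
    · exact descInL_lt hwf.2 h
end

mutual
theorem descIn_subAt {c x : ℕ} : ∀ {T : STree}, ND T → descIn c x T = true →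
    ∃ cs, subAt c T = some (.node c cs) ∧ memL x cs = true
  | .leaf => by simp [descIn]
  | .node b cs => by
    intro hnd h
    rw [descIn, Bool.or_eq_true, Bool.and_eq_true, beq_iff_eq] at h
    rcases h with ⟨rfl, h⟩ | h
    · exact ⟨cs, by rw [subAt, if_pos rfl], h⟩
    · obtain ⟨t, ht, h2⟩ := descInL_exists.1 h
      have hct : mem c t = true := (desc_mem h2).1
      have hcb : c ≠ b := by
        rintro rfl
        have := memL_of_mem ht hct
        rw [(nd_node hnd).1] at this; cases this
      obtain ⟨cs', h3, h4⟩ := descIn_subAt (nd_of_mem (nd_node hnd).2 ht) h2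
      refine ⟨cs', ?_, h4⟩
      rw [subAt, if_neg hcb, subAtL_eq (nd_node hnd).2 ht hct, h3]
end

mutual
theorem subAt_descIn {c x : ℕ} : ∀ {T : STree} {cs : List STree},
    subAt c T = some (.node c cs) → memL x cs = true → descIn c x T = true
  | .leaf, cs => by simp [subAt]
  | .node b bs, cs => by
    intro h hx
    rw [subAt] at h
    rw [descIn, Bool.or_eq_true]
    split at h
    · rename_i he
      subst he
      obtain h2 := Option.some_inj.1 h
      injection h2 with h3 h4
      subst h4
      left
      rw [Bool.and_eq_true, beq_iff_eq]
      exact ⟨rfl, hx⟩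
    · exact Or.inr (subAtL_descInL h hx)
theorem subAtL_descInL {c x : ℕ} : ∀ {ts : List STree} {cs : List STree},
    subAtL c ts = some (.node c cs) → memL x cs = true → descInL c x ts = true
  | [], cs => by simp [subAtL]
  | t :: ts, cs => by
    intro h hx
    rw [subAtL] at h
    rw [descInL, Bool.or_eq_true]
    split at h
    · exact Or.inl (subAt_descIn h hx)
    · exact Or.inr (subAtL_descInL h hx)
end

end STree
namespace STree

mutual
theorem nest {a b x : ℕ} : ∀ {T ta tb : STree}, ND T → subAt a T = some ta →
    subAt b T = some tb → mem x ta = true → mem x tb = true →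
    mem a tb = true ∨ mem b ta = true
  | .leaf, ta, tb => by simp [subAt]
  | .node r cs, ta, tb => by
    intro hnd ha hb hxa hxb
    rw [subAt] at ha
    split at ha
    · obtain rfl := Option.some_inj.1 ha
      exact Or.inr (mem_of_subAt' hb)
    · rw [subAt] at hb
      split at hb
      · obtain rfl := Option.some_inj.1 hb
        obtain ⟨csa, rfl⟩ := subAtL_shape ha
        left
        rw [mem, Bool.or_eq_true]
        refine Or.inr (memL_of_subAtL ha ?_)
        rw [mem, Bool.or_eq_true, beq_iff_eq]
        exact Or.inl rfl
      · exact nestL (nd_node hnd).2 ha hb hxa hxb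
theorem nestL {a b x : ℕ} : ∀ {ts : List STree} {ta tb : STree}, NDL ts →
    subAtL a ts = some ta → subAtL b ts = some tb → mem x ta = true →
    mem x tb = true → mem a tb = true ∨ mem b ta = true
  | [], ta, tb => by simp [subAtL]
  | t :: ts, ta, tb => by
    intro hnd ha hb hxa hxb
    obtain ⟨hndt, hnd', hdisj⟩ := ndL_cons hnd
    rw [subAtL] at ha hb
    split at ha <;> split at hb
    · exact nest hndt ha hb hxa hxb
    · have h1 : mem x t = true := mem_of_subAt ha hxa
      have h2 : memL x ts = true := memL_of_subAtL hb hxb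
      rw [hdisj x h1] at h2; cases h2
    · have h1 : mem x t = true := mem_of_subAt hb hxb
      have h2 : memL x ts = true := memL_of_subAtL ha hxa
      rw [hdisj x h1] at h2; cases h2
    · exact nestL hnd' ha hb hxa hxb
end

theorem memL_of_descIn_forest {c x : ℕ} {cs : List STree}
    (h : memL x cs = true) : mem x (STree.node c cs) = true := by
  rw [mem, Bool.or_eq_true]; exact Or.inr h

theorem descIn_trans {s : ℕ → ℕ} {a b x : ℕ} {T : STree} (hw : wf s T)
    (hnd : ND T) (h1 : descIn b a T = true) (h2 : descIn a x T = true) :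
    descIn b x T = true := by
  obtain ⟨csb, hsb, hab⟩ := descIn_subAt hnd h1
  obtain ⟨csa, hsa, hax⟩ := descIn_subAt hnd h2
  have hatb : mem a (STree.node b csb) = true := memL_of_descIn_forest hab
  have htr := subAt_trans hnd hsb hatb
  rw [hsa] at htr
  have hxtb : mem x (STree.node b csb) = true :=
    mem_of_subAt htr.symm (memL_of_descIn_forest hax)
  rw [mem, Bool.or_eq_true, beq_iff_eq] at hxtb
  rcases hxtb with rfl | hxtb
  · exact absurd (lt_trans (descIn_lt hw h2) (descIn_lt hw h1)) (lt_irrefl x)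
  · exact subAt_descIn hsb hxtb

theorem descIn_comparable {s : ℕ → ℕ} {a b x : ℕ} {T : STree} (hw : wf s T)
    (hnd : ND T) (hb : descIn b x T = true) (ha : descIn a x T = true)
    (hab : a < b) : descIn b a T = true := by
  obtain ⟨csb, hsb, hxb⟩ := descIn_subAt hnd hb
  obtain ⟨csa, hsa, hxa⟩ := descIn_subAt hnd ha
  rcases nest hnd hsa hsb (memL_of_descIn_forest hxa) (memL_of_descIn_forest hxb)
    with h | h
  · rw [mem, Bool.or_eq_true, beq_iff_eq] at h
    rcases h with rfl | h
    · exact (lt_irrefl _ hab).elim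
    · exact subAt_descIn hsb h
  · rw [mem, Bool.or_eq_true, beq_iff_eq] at h
    rcases h with rfl | h
    · exact (lt_irrefl _ hab).elim
    · exact absurd (lt_trans hab (descIn_lt hw (subAt_descIn hsa h))) (lt_irrefl a)

end STree
namespace STree

theorem memL_exists {x : ℕ} {cs : List STree} :
    memL x cs = true ↔ ∃ t ∈ cs, mem x t = true := by
  induction cs with
  | nil => simp [memL]
  | cons t ts ih =>
    rw [memL_cons, ih]
    constructor
    · rintro (h | ⟨u, hu, h⟩)
      · exact ⟨t, List.mem_cons_self, h⟩
      · exact ⟨u, List.mem_cons_of_mem _ hu, h⟩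
    · rintro ⟨u, hu, h⟩
      rw [List.mem_cons] at hu
      rcases hu with rfl | hu
      · exact Or.inl h
      · exact Or.inr ⟨u, hu, h⟩

theorem descIn_of_child {c x : ℕ} {cs : List STree} {t : STree} (ht : t ∈ cs)
    (h : descIn c x t = true) {r : ℕ} : descIn c x (.node r cs) = true := by
  rw [descIn, Bool.or_eq_true]
  exact Or.inr (descInL_exists.2 ⟨t, ht, h⟩)

theorem cardL_lift {s : ℕ → ℕ} {y x : ℕ} {cs : List STree} (hnd : NDL cs)
    {t : STree} (ht : t ∈ cs) (hy : mem y t = true) (hx : mem x t = true) :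
    cardL s y x cs = card s y x t := by
  induction cs with
  | nil => cases ht
  | cons u us ih =>
    obtain ⟨_, hnd', hdisj⟩ := ndL_cons hnd
    rw [List.mem_cons] at ht
    rcases ht with rfl | h1
    · rw [cardL, if_pos hy, if_pos hx]
    · have hy' : mem y u = false := by
        rcases Bool.eq_false_or_eq_true (mem y u) with h | h
        · have := hdisj y h; rw [memL_of_mem h1 hy] at this; cases this
        · exact h
      have hx' : mem x u = false := by
        rcases Bool.eq_false_or_eq_true (mem x u) with h | h
        · have := hdisj x h; rw [memL_of_mem h1 hx] at this; cases this
        · exact h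
      rw [cardL, if_neg (by simp [hy']), if_neg (by simp [hx']), ih hnd' h1]

mutual
theorem card_subAt {s : ℕ → ℕ} {y x : ℕ} : ∀ {T u : STree}, ND T →
    subAt y T = some u → mem x u = true → x ≠ y → card s y x T = card s y x u
  | .leaf, u => by simp [subAt]
  | .node r cs, u => by
    intro hnd h hx hxy
    rw [subAt] at h
    split at h
    · obtain rfl := Option.some_inj.1 h; rfl
    · rename_i hyr
      rw [card, if_neg (fun hh => hyr hh.symm)]
      exact cardL_subAtL (nd_node hnd).2 h hx hxy
theorem cardL_subAtL {s : ℕ → ℕ} {y x : ℕ} : ∀ {ts : List STree} {u : STree},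
    NDL ts → subAtL y ts = some u → mem x u = true → x ≠ y →
    cardL s y x ts = card s y x u
  | [], u => by simp [subAtL]
  | t :: ts, u => by
    intro hnd h hx hxy
    obtain ⟨hndt, hnd', hdisj⟩ := ndL_cons hnd
    rw [subAtL] at h
    split at h
    · rename_i hyt
      have hxt : mem x t = true := mem_of_subAt h hx
      rw [cardL, if_pos hyt, if_pos hxt]
      exact card_subAt hndt h hx hxy
    · rename_i hyt
      have hxts : memL x ts = true := memL_of_subAtL h hx
      have hxt : mem x t = false := by
        rcases Bool.eq_false_or_eq_true (mem x t) with h2 | h2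
        · rw [hdisj x h2] at hxts; cases hxts
        · exact h2
      rw [cardL, if_neg (by simp at hyt ⊢; exact hyt), if_neg (by simp [hxt])]
      exact cardL_subAtL hnd' h hx hxy
end

theorem card_at_node {s : ℕ → ℕ} {y x : ℕ} {T : STree} {cs : List STree}
    (hnd : ND T) (h : subAt y T = some (.node y cs)) (hx : memL x cs = true) :
    card s y x T = idxOf x cs := by
  have hndu : ND (.node y cs) := nd_subAt hnd h
  have hxy : x ≠ y := by
    rintro rfl
    rw [(nd_node hndu).1] at hx; cases hx
  rw [card_subAt hnd h (memL_of_descIn_forest hx) hxy, card, if_pos rfl]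

mutual
theorem card_bound {s : ℕ → ℕ} {y x : ℕ} : ∀ {T : STree}, wf s T → x < y →
    mem x T = true → card s y x T ≤ s y
  | .leaf => by simp [card]
  | .node a cs => by
    intro hwf hxy hx
    rw [wf] at hwf
    rw [card]
    split
    · rename_i hay
      subst hay
      rw [mem, Bool.or_eq_true, beq_iff_eq] at hx
      rcases hx with rfl | hx
      · exact (lt_irrefl x hxy).elim
      · have := idxOf_lt_length hx
        rw [hwf.1] at this
        omega
    · exact cardL_bound hwf.2.2 hxy
theorem cardL_bound {s : ℕ → ℕ} {y x : ℕ} : ∀ {ts : List STree}, wfL s ts →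
    x < y → cardL s y x ts ≤ s y
  | [] => by simp [cardL]
  | t :: ts => by
    intro hwf hxy
    rw [wfL] at hwf
    rw [cardL]
    split
    · split
      · exact card_bound hwf.1 hxy (by assumption)
      · split <;> simp
    · split
      · simp
      · exact cardL_bound hwf.2 hxy
end

theorem cardL_of_idx_lt {s : ℕ → ℕ} {x y : ℕ} {cs : List STree}
    (hx : memL x cs = true) (hy : memL y cs = true)
    (h : idxOf x cs < idxOf y cs) : cardL s y x cs = 0 := by
  induction cs with
  | nil => simp [memL] at hx
  | cons t ts ih =>
    rcases Bool.eq_false_or_eq_true (mem x t) with h1 | h1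
    · have h2 : mem y t = false := by
        rcases Bool.eq_false_or_eq_true (mem y t) with h2 | h2
        · rw [idxOf_pos h1, idxOf_pos h2] at h; cases h
        · exact h2
      rw [cardL, if_neg (by simp [h2]), if_pos h1]
    · rcases Bool.eq_false_or_eq_true (mem y t) with h2 | h2
      · rw [idxOf_neg h1, idxOf_pos h2] at h; omega
      · rw [memL_cons] at hx hy
        rcases hx with hx | hx; · rw [hx] at h1; cases h1
        rcases hy with hy | hy; · rw [hy] at h2; cases h2
        rw [idxOf_neg h1, idxOf_neg h2, Nat.add_lt_add_iff_right] at h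
        rw [cardL, if_neg (by simp [h2]), if_neg (by simp [h1])]
        exact ih hx hy h

theorem cardL_of_idx_gt {s : ℕ → ℕ} {x y : ℕ} {cs : List STree}
    (hx : memL x cs = true) (hy : memL y cs = true)
    (h : idxOf y cs < idxOf x cs) : cardL s y x cs = s y := by
  induction cs with
  | nil => simp [memL] at hx
  | cons t ts ih =>
    rcases Bool.eq_false_or_eq_true (mem y t) with h2 | h2
    · have h1 : mem x t = false := by
        rcases Bool.eq_false_or_eq_true (mem x t) with h1 | h1
        · rw [idxOf_pos h1, idxOf_pos h2] at h; cases h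
        · exact h1
      have hxts : memL x ts = true := by
        rw [memL_cons] at hx
        rcases hx with hx | hx
        · rw [hx] at h1; cases h1
        · exact hx
      rw [cardL, if_pos h2, if_neg (by simp [h1]), if_pos hxts]
    · rcases Bool.eq_false_or_eq_true (mem x t) with h1 | h1
      · rw [idxOf_pos h1, idxOf_neg h2] at h; omega
      · rw [memL_cons] at hx hy
        rcases hx with hx | hx; · rw [hx] at h1; cases h1
        rcases hy with hy | hy; · rw [hy] at h2; cases h2
        rw [idxOf_neg h1, idxOf_neg h2, Nat.add_lt_add_iff_right] at h
        rw [cardL, if_neg (by simp [h2]), if_neg (by simp [h1])]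
        exact ih hx hy h

end STree
namespace STree

theorem card_root {s : ℕ → ℕ} {r x : ℕ} {cs : List STree} :
    card s r x (.node r cs) = idxOf x cs := by
  rw [card, if_pos rfl]

theorem mem_root {r : ℕ} {cs : List STree} : mem r (.node r cs) = true := by
  rw [mem, Bool.or_eq_true, beq_iff_eq]; exact Or.inl rfl

theorem mem_node_cases {x r : ℕ} {cs : List STree}
    (h : mem x (.node r cs) = true) : x = r ∨ memL x cs = true := by
  rw [mem, Bool.or_eq_true, beq_iff_eq] at h; exact h

/-- If `a < c` are both in the tree but `a` is not below `c`, some common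
ancestor `d > c` separates them. -/
theorem sep {s : ℕ → ℕ} {a c : ℕ} : ∀ {T : STree}, wf s T → ND T →
    mem a T = true → mem c T = true → a < c → descIn c a T = false →
    ∃ d, c < d ∧ mem d T = true ∧ card s d a T ≠ card s d c T
  | .leaf => by simp [mem]
  | .node r cs => by
    intro hwf hnd ha hc hac hdesc
    rw [wf] at hwf
    rcases mem_node_cases hc with rfl | hc
    · have haL : memL a cs = true := by
        rcases mem_node_cases ha with rfl | h
        · exact (lt_irrefl a hac).elim
        · exact h
      have : descIn c a (STree.node c cs) = true := by
        rw [descIn, Bool.or_eq_true, Bool.and_eq_true, beq_iff_eq]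
        exact Or.inl ⟨rfl, haL⟩
      rw [this] at hdesc; cases hdesc
    · have hcr : c < r := hwf.2.1 c ((memL_iff c cs).1 hc)
      have haL : memL a cs = true := by
        rcases mem_node_cases ha with rfl | h
        · omega
        · exact h
      by_cases hidx : idxOf a cs = idxOf c cs
      · obtain ⟨t, ht, hat, hct⟩ := exists_mem_both_of_idx_eq haL hc hidx
        have hdt : descIn c a t = false := by
          rcases Bool.eq_false_or_eq_true (descIn c a t) with h | h
          · rw [descIn_of_child ht h] at hdesc; cases hdesc
          · exact h
        obtain ⟨d, hd1, hd2, hd3⟩ := sep (wfL_of_mem hwf.2.2 ht)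
          (nd_of_mem (nd_node hnd).2 ht) hat hct hac hdt
        have hdr : d ≠ r := by
          have : d < r := hwf.2.1 d ((memL_iff d cs).1 (memL_of_mem ht hd2))
          omega
        refine ⟨d, hd1, ?_, ?_⟩
        · rw [mem, Bool.or_eq_true]; exact Or.inr (memL_of_mem ht hd2)
        · rw [card, if_neg (Ne.symm hdr), card, if_neg (Ne.symm hdr),
            cardL_lift (nd_node hnd).2 ht hd2 hat,
            cardL_lift (nd_node hnd).2 ht hd2 hct]
          exact hd3
      · refine ⟨r, hcr, mem_root, ?_⟩
        rw [card_root, card_root]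
        exact hidx

theorem same_child {s : ℕ → ℕ} {a b c : ℕ} {T : STree} (hwf : wf s T)
    (hnd : ND T) (hcb : descIn c b T = true) (hba : descIn b a T = true) :
    descIn c a T = true ∧ card s c a T = card s c b T := by
  refine ⟨descIn_trans hwf hnd hcb hba, ?_⟩
  obtain ⟨csc, hsc, hbc⟩ := descIn_subAt hnd hcb
  obtain ⟨csc', hsc', hac⟩ := descIn_subAt hnd
    (descIn_trans hwf hnd hcb hba)
  rw [hsc] at hsc'
  obtain hcseq := Option.some_inj.1 hsc'
  injection hcseq with _ hcseq
  subst hcseq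
  obtain ⟨t, ht, hbt⟩ := memL_exists.1 hbc
  -- a is in the same child t of c as b
  have hndc : ND (STree.node c csc) := nd_subAt hnd hsc
  have htr := subAt_trans hnd hsc (memL_of_descIn_forest hbc)
  have hbc' : b ≠ c := by
    have := descIn_lt hwf hcb; omega
  have : subAt b (STree.node c csc) = subAt b t := by
    rw [subAt, if_neg hbc']
    exact subAtL_eq (nd_node hndc).2 ht hbt
  obtain ⟨csb, hsb, hab⟩ := descIn_subAt hnd hba
  have hsbt : subAt b t = some (.node b csb) := by
    rw [← this, ← htr, hsb]
  have hat : mem a t = true :=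
    mem_of_subAt hsbt (memL_of_descIn_forest hab)
  rw [card_at_node hnd hsc hac, card_at_node hnd hsc hbc]
  exact idx_eq_of_mem_same (nd_node hndc).2 ht hat hbt

end STree
namespace STree

theorem mem_getLast? {l : List STree} {a : STree} (h : l.getLast? = some a) :
    a ∈ l := by
  cases l with
  | nil => simp at h
  | cons x xs =>
    rw [List.getLast?_eq_getLast_of_ne_nil (by simp)] at h
    rw [← Option.some_inj.1 h]
    exact List.getLast_mem _

theorem exists_getLast? {l : List STree} (h : l ≠ []) :
    ∃ a, l.getLast? = some a := by
  cases l with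
  | nil => exact absurd rfl h
  | cons x xs => exact ⟨(x::xs).getLast (by simp), List.getLast?_eq_getLast _⟩

mutual
theorem inRight_mem {c x : ℕ} : ∀ {T : STree}, inRight c x T = true →
    mem c T = true
  | .leaf => by simp [inRight]
  | .node b bs => by
    intro h
    rw [inRight, Bool.or_eq_true, Bool.and_eq_true, beq_iff_eq] at h
    rcases h with ⟨rfl, _⟩ | h
    · exact mem_root
    · rw [mem, Bool.or_eq_true]
      exact Or.inr (inRightL_mem h)
theorem inRightL_mem {c x : ℕ} : ∀ {ts : List STree}, inRightL c x ts = true →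
    memL c ts = true
  | [] => by simp [inRightL]
  | t :: ts => by
    intro h
    rw [inRightL, Bool.or_eq_true] at h
    rw [memL_cons]
    rcases h with h | h
    · exact Or.inl (inRight_mem h)
    · exact Or.inr (inRightL_mem h)
end

mutual
theorem inRight_iff {c x : ℕ} : ∀ {T : STree} {cs : List STree}, ND T →
    subAt c T = some (.node c cs) →
    (inRight c x T = true ↔ ∃ tl, cs.getLast? = some tl ∧ mem x tl = true)
  | .leaf, cs => by simp [subAt]
  | .node b bs, cs => by
    intro hnd h
    rw [subAt] at h
    rw [inRight]
    split at h
    · rename_i he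
      subst he
      obtain h2 := Option.some_inj.1 h
      injection h2 with _ h3
      subst h3
      have hR : inRightL c x bs = false := by
        rcases Bool.eq_false_or_eq_true (inRightL c x bs) with h2 | h2
        · have := inRightL_mem h2
          rw [(nd_node hnd).1] at this; cases this
        · exact h2
      rw [hR, Bool.or_false, Bool.and_eq_true, beq_iff_eq]
      cases hL : bs.getLast? with
      | none => simp
      | some tl => simp
    · rename_i hne
      have hb : (b == c) = false := by
        simp only [beq_eq_false_iff_ne, ne_eq]
        exact fun hh => hne hh.symm
      rw [hb, Bool.false_and, Bool.false_or]
      exact inRightL_iff (nd_node hnd).2 h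
theorem inRightL_iff {c x : ℕ} : ∀ {ts : List STree} {cs : List STree}, NDL ts →
    subAtL c ts = some (.node c cs) →
    (inRightL c x ts = true ↔ ∃ tl, cs.getLast? = some tl ∧ mem x tl = true)
  | [], cs => by simp [subAtL]
  | t :: ts, cs => by
    intro hnd h
    obtain ⟨hndt, hnd', hdisj⟩ := ndL_cons hnd
    rw [subAtL] at h
    rw [inRightL, Bool.or_eq_true]
    split at h
    · rename_i hct
      have hR : inRightL c x ts = false := by
        rcases Bool.eq_false_or_eq_true (inRightL c x ts) with h2 | h2
        · have := inRightL_mem h2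
          rw [hdisj c hct] at this; cases this
        · exact h2
      rw [inRight_iff hndt h]
      simp [hR]
    · rename_i hct
      have hL : inRight c x t = false := by
        rcases Bool.eq_false_or_eq_true (inRight c x t) with h2 | h2
        · exact absurd (inRight_mem h2) hct
        · exact h2
      rw [inRightL_iff hnd' h]
      simp [hL]
end

theorem idx_last_iff {x : ℕ} {cs : List STree} (hnd : NDL cs)
    (hx : memL x cs = true) :
    (idxOf x cs = cs.length - 1 ↔ ∃ tl, cs.getLast? = some tl ∧ mem x tl = true) := by
  induction cs with
  | nil => simp [memL] at hx
  | cons t ts ih =>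
    obtain ⟨_, hnd', hdisj⟩ := ndL_cons hnd
    cases ts with
    | nil =>
      have hxt : mem x t = true := by
        rw [memL_cons] at hx
        rcases hx with hx | hx
        · exact hx
        · simp [memL] at hx
      simp [idxOf_pos hxt, hxt]
    | cons u us =>
      rcases Bool.eq_false_or_eq_true (mem x t) with h1 | h1
      · rw [idxOf_pos h1, List.getLast?_cons_cons]
        constructor
        · intro hh
          exfalso
          simp only [List.length_cons] at hh
          omega
        · rintro ⟨tl, htl, hxtl⟩
          have htlm : tl ∈ u :: us := mem_getLast? htl
          have := hdisj x h1
          rw [memL_of_mem htlm hxtl] at this; cases this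
      · have hx' : memL x (u :: us) = true := by
          rw [memL_cons] at hx
          rcases hx with hx | hx
          · rw [hx] at h1; cases h1
          · exact hx
        rw [idxOf_neg h1, List.getLast?_cons_cons, ← ih hnd' hx']
        simp only [List.length_cons]
        omega

end STree
namespace STree

mutual
theorem inRight_descIn {c x : ℕ} : ∀ {T : STree}, inRight c x T = true →
    descIn c x T = true
  | .leaf => by simp [inRight, descIn]
  | .node b bs => by
    intro h
    rw [inRight, Bool.or_eq_true, Bool.and_eq_true] at h
    rw [descIn, Bool.or_eq_true]
    rcases h with ⟨h1, h2⟩ | h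
    · left
      rw [Bool.and_eq_true]
      refine ⟨h1, ?_⟩
      cases hL : bs.getLast? with
      | none => rw [hL] at h2; cases h2
      | some tl =>
        rw [hL] at h2
        exact memL_of_mem (mem_getLast? hL) h2
    · exact Or.inr (inRightL_descInL h)
theorem inRightL_descInL {c x : ℕ} : ∀ {ts : List STree},
    inRightL c x ts = true → descInL c x ts = true
  | [] => by simp [inRightL, descInL]
  | t :: ts => by
    intro h
    rw [inRightL, Bool.or_eq_true] at h
    rw [descInL, Bool.or_eq_true]
    rcases h with h | h
    · exact Or.inl (inRight_descIn h)
    · exact Or.inr (inRightL_descInL h)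
end

theorem card_eq_s_iff {s : ℕ → ℕ} {c x : ℕ} {T : STree} (hwf : wf s T)
    (hnd : ND T) (h : descIn c x T = true) :
    (inRight c x T = true ↔ card s c x T = s c) := by
  obtain ⟨cs, hsc, hxc⟩ := descIn_subAt hnd h
  have hwfc : wf s (STree.node c cs) := wf_subAt hwf hsc
  rw [wf] at hwfc
  have hndc := nd_subAt hnd hsc
  rw [card_at_node hnd hsc hxc, inRight_iff hnd hsc,
    ← idx_last_iff (nd_node hndc).2 hxc, hwfc.1]
  simp

theorem inRight_sub {s : ℕ → ℕ} {b x y : ℕ} {T : STree} (hwf : wf s T)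
    (hnd : ND T) (h1 : inRight b x T = true) (h2 : descIn x y T = true) :
    inRight b y T = true := by
  obtain ⟨csb, hsb⟩ := subAt_node (inRight_mem h1)
  obtain ⟨tl, htl, hxtl⟩ := (inRight_iff hnd hsb).1 h1
  obtain ⟨csx, hsx, hyx⟩ := descIn_subAt hnd h2
  have hxb : x < b := descIn_lt hwf (inRight_descIn h1)
  have htlm : tl ∈ csb := mem_getLast? htl
  have hxtb : mem x (STree.node b csb) = true :=
    memL_of_descIn_forest (memL_of_mem htlm hxtl)
  have htr := subAt_trans hnd hsb hxtb
  have hndb := nd_subAt hnd hsb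
  have : subAt x (STree.node b csb) = subAt x tl := by
    rw [subAt, if_neg (by omega : x ≠ b)]
    exact subAtL_eq (nd_node hndb).2 htlm hxtl
  rw [this] at htr
  have hytl : mem y tl = true := by
    refine mem_of_subAt (htr ▸ hsx) (memL_of_descIn_forest hyx)
  exact (inRight_iff hnd hsb).2 ⟨tl, htl, hytl⟩

mutual
theorem rightEmpty_mem {a : ℕ} : ∀ {T : STree}, rightEmpty a T = true →
    mem a T = true
  | .leaf => by simp [rightEmpty]
  | .node b bs => by
    intro h
    rw [rightEmpty, Bool.or_eq_true, Bool.and_eq_true, beq_iff_eq] at h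
    rcases h with ⟨rfl, _⟩ | h
    · exact mem_root
    · rw [mem, Bool.or_eq_true]
      exact Or.inr (rightEmptyL_mem h)
theorem rightEmptyL_mem {a : ℕ} : ∀ {ts : List STree},
    rightEmptyL a ts = true → memL a ts = true
  | [] => by simp [rightEmptyL]
  | t :: ts => by
    intro h
    rw [rightEmptyL, Bool.or_eq_true] at h
    rw [memL_cons]
    rcases h with h | h
    · exact Or.inl (rightEmpty_mem h)
    · exact Or.inr (rightEmptyL_mem h)
end

mutual
theorem rightEmpty_iff {a : ℕ} : ∀ {T : STree} {cs : List STree}, ND T →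
    subAt a T = some (.node a cs) →
    (rightEmpty a T = true ↔ cs.getLast? = some .leaf)
  | .leaf, cs => by simp [subAt]
  | .node b bs, cs => by
    intro hnd h
    rw [subAt] at h
    rw [rightEmpty]
    split at h
    · rename_i he
      subst he
      obtain h2 := Option.some_inj.1 h
      injection h2 with _ h3
      subst h3
      have hR : rightEmptyL a bs = false := by
        rcases Bool.eq_false_or_eq_true (rightEmptyL a bs) with h2 | h2
        · have := rightEmptyL_mem h2
          rw [(nd_node hnd).1] at this; cases this
        · exact h2
      rw [hR, Bool.or_false, Bool.and_eq_true, beq_iff_eq]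
      cases hL : bs.getLast? with
      | none => simp
      | some tl => cases tl <;> simp
    · rename_i hne
      have hb : (b == a) = false := by
        simp only [beq_eq_false_iff_ne, ne_eq]
        exact fun hh => hne hh.symm
      rw [hb, Bool.false_and, Bool.false_or]
      exact rightEmptyL_iff (nd_node hnd).2 h
theorem rightEmptyL_iff {a : ℕ} : ∀ {ts : List STree} {cs : List STree},
    NDL ts → subAtL a ts = some (.node a cs) →
    (rightEmptyL a ts = true ↔ cs.getLast? = some .leaf)
  | [], cs => by simp [subAtL]
  | t :: ts, cs => by
    intro hnd h
    obtain ⟨hndt, hnd', hdisj⟩ := ndL_cons hnd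
    rw [subAtL] at h
    rw [rightEmptyL, Bool.or_eq_true]
    split at h
    · rename_i hat
      have hR : rightEmptyL a ts = false := by
        rcases Bool.eq_false_or_eq_true (rightEmptyL a ts) with h2 | h2
        · have := rightEmptyL_mem h2
          rw [hdisj a hat] at this; cases this
        · exact h2
      rw [rightEmpty_iff hndt h]
      simp [hR]
    · rename_i hat
      have hL : rightEmpty a t = false := by
        rcases Bool.eq_false_or_eq_true (rightEmpty a t) with h2 | h2
        · exact absurd (rightEmpty_mem h2) hat
        · exact h2
      rw [rightEmptyL_iff hnd' h]
      simp [hL]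
end

/-- If the rightmost subtree of `a` is nonempty, it has a root `a'`, which is
in the rightmost subtree of `a` and whose only strict ancestors are `a` and
the ancestors of `a`. -/
theorem lastChild_root {s : ℕ → ℕ} {a : ℕ} {T : STree} (hwf : wf s T)
    (hnd : ND T) (ha : mem a T = true) (hre : rightEmpty a T = false) :
    ∃ a', inRight a a' T = true ∧
      ∀ b, descIn b a' T = true → b = a ∨ descIn b a T = true := by
  obtain ⟨cs, hsa⟩ := subAt_node ha
  have hwfa : wf s (STree.node a cs) := wf_subAt hwf hsa
  rw [wf] at hwfa
  have hcs : cs ≠ [] := by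
    intro hh
    rw [hh] at hwfa
    simp at hwfa
  obtain ⟨tl, htl⟩ := exists_getLast? hcs
  have htlm : tl ∈ cs := mem_getLast? htl
  cases tl with
  | leaf =>
    rw [← rightEmpty_iff hnd hsa] at htl
    rw [htl] at hre; cases hre
  | node a' cs' =>
    have hma' : mem a' (STree.node a' cs') = true := mem_root
    refine ⟨a', (inRight_iff hnd hsa).2 ⟨_, htl, hma'⟩, ?_⟩
    intro b hb
    obtain ⟨csb, hsb, ha'b⟩ := descIn_subAt hnd hb
    have hma'b : mem a' (STree.node b csb) = true := memL_of_descIn_forest ha'b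
    have hma'a : mem a' (STree.node a cs) = true :=
      memL_of_descIn_forest (memL_of_mem htlm hma')
    rcases nest hnd hsa hsb hma'a hma'b with h | h
    · rcases mem_node_cases h with h1 | h1
      · exact Or.inl h1.symm
      · exact Or.inr (subAt_descIn hsb h1)
    · rcases mem_node_cases h with h1 | h1
      · exact Or.inl h1
      · -- b in some child of a; that child must be tl
        exfalso
        obtain ⟨tj, htj, hbtj⟩ := memL_exists.1 h1
        have hba : b ≠ a := by
          intro hh
          rw [hh] at h1
          have hnda := nd_subAt hnd hsa
          rw [(nd_node hnda).1] at h1; cases h1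
        -- subAt b T = subAt b tj
        have htr := subAt_trans hnd hsa h
        have hndA := nd_subAt hnd hsa
        have : subAt b (STree.node a cs) = subAt b tj := by
          rw [subAt, if_neg hba]
          exact subAtL_eq (nd_node hndA).2 htj hbtj
        rw [this] at htr
        have ha'tj : mem a' tj = true :=
          mem_of_subAt (htr ▸ hsb) hma'b
        have htjtl : tj = STree.node a' cs' :=
          mem_of_memL_nd (nd_node hndA).2 htj ha'tj htlm hma'
        subst htjtl
        -- b is in node a' cs', b ≠ a' since a' < b
        have ha'lt : a' < b := descIn_lt hwf hb
        rcases mem_node_cases hbtj with h2 | h2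
        · omega
        · -- subAt b (node a' cs') goes into cs', whose labels exclude a'
          have : subAt b (STree.node a' cs') = subAtL b cs' := by
            rw [subAt, if_neg (by omega : b ≠ a')]
          rw [this] at htr
          have hndtl : ND (STree.node a' cs') := nd_of_mem (nd_node hndA).2 htlm
          have : memL a' cs' = true := memL_of_subAtL (htr ▸ hsb) hma'b
          rw [(nd_node hndtl).1] at this; cases this

end STree
namespace STree

theorem memL_of_mem_node {x r : ℕ} {cs : List STree} (h : mem x (.node r cs) = true)
    (hne : x ≠ r) : memL x cs = true := by
  rcases mem_node_cases h with rfl | h1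
  · exact absurd rfl hne
  · exact h1

/-- The three labels `a < b < c` lie in a common child. -/
theorem shared_child {a b c : ℕ} {cs : List STree} (hnd : NDL cs)
    (ha : memL a cs = true) (hb : memL b cs = true) (hc : memL c cs = true)
    (h1 : idxOf a cs = idxOf b cs) (h2 : idxOf b cs = idxOf c cs) :
    ∃ t ∈ cs, mem a t = true ∧ mem b t = true ∧ mem c t = true := by
  obtain ⟨t1, ht1, ha1, hb1⟩ := exists_mem_both_of_idx_eq ha hb h1
  obtain ⟨t2, ht2, hb2, hc2⟩ := exists_mem_both_of_idx_eq hb hc h2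
  obtain rfl := mem_of_memL_nd hnd ht1 hb1 ht2 hb2
  exact ⟨t1, ht1, ha1, hb1, hc2⟩

theorem card_trans {s : ℕ → ℕ} {a b c : ℕ} : ∀ {T : STree}, wf s T → ND T →
    mem a T = true → mem b T = true → mem c T = true → a < b → b < c →
    card s b a T = 0 ∨ card s c b T ≤ card s c a T
  | .leaf => by simp [mem]
  | .node r cs => by
    intro hwf hnd ha hb hc hab hbc
    rw [wf] at hwf
    have haL : memL a cs = true := memL_of_mem_node ha (by
      rcases mem_node_cases hc with rfl | h1
      · omega
      · have := hwf.2.1 c ((memL_iff c cs).1 h1); omega)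
    have hbL : memL b cs = true := memL_of_mem_node hb (by
      rcases mem_node_cases hc with rfl | h1
      · omega
      · have := hwf.2.1 c ((memL_iff c cs).1 h1); omega)
    by_cases hcr : c = r
    · subst hcr
      rcases lt_trichotomy (idxOf a cs) (idxOf b cs) with h | h | h
      · left
        rw [card, if_neg (by omega : c ≠ b)]
        exact cardL_of_idx_lt haL hbL h
      · right; rw [card_root, card_root]; omega
      · right; rw [card_root, card_root]; omega
    · have hcL : memL c cs = true := memL_of_mem_node hc hcr
      have hclt : c < r := hwf.2.1 c ((memL_iff c cs).1 hcL)
      rw [card, if_neg (by omega : r ≠ b), card, if_neg (fun h => hcr h.symm),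
        card, if_neg (fun h => hcr h.symm)]
      rcases lt_trichotomy (idxOf a cs) (idxOf b cs) with h | h | h
      · exact Or.inl (cardL_of_idx_lt haL hbL h)
      · rcases lt_trichotomy (idxOf b cs) (idxOf c cs) with h2 | h2 | h2
        · right
          rw [cardL_of_idx_lt hbL hcL h2]
          omega
        · obtain ⟨t, ht, hat, hbt, hct⟩ :=
            shared_child (nd_node hnd).2 haL hbL hcL h h2
          rw [cardL_lift (nd_node hnd).2 ht hbt hat,
            cardL_lift (nd_node hnd).2 ht hct hbt,
            cardL_lift (nd_node hnd).2 ht hct hat]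
          exact card_trans (wfL_of_mem hwf.2.2 ht) (nd_of_mem (nd_node hnd).2 ht)
            hat hbt hct hab hbc
        · right
          rw [cardL_of_idx_gt hbL hcL h2, cardL_of_idx_gt haL hcL (by omega)]
      · right
        rcases lt_trichotomy (idxOf b cs) (idxOf c cs) with h2 | h2 | h2
        · rw [cardL_of_idx_lt hbL hcL h2]; omega
        · obtain ⟨t, ht, hbt, hct⟩ := exists_mem_both_of_idx_eq hbL hcL h2
          rw [cardL_lift (nd_node hnd).2 ht hct hbt,
            cardL_of_idx_gt haL hcL (by omega)]
          exact card_bound (wfL_of_mem hwf.2.2 ht) hbc hbt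
        · rw [cardL_of_idx_gt hbL hcL h2, cardL_of_idx_gt haL hcL (by omega)]

theorem card_planar {s : ℕ → ℕ} {a b c : ℕ} : ∀ {T : STree}, wf s T → ND T →
    mem a T = true → mem b T = true → mem c T = true → a < b → b < c →
    card s b a T = s b ∨ card s c a T ≤ card s c b T
  | .leaf => by simp [mem]
  | .node r cs => by
    intro hwf hnd ha hb hc hab hbc
    rw [wf] at hwf
    have haL : memL a cs = true := memL_of_mem_node ha (by
      rcases mem_node_cases hc with rfl | h1
      · omega
      · have := hwf.2.1 c ((memL_iff c cs).1 h1); omega)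
    have hbL : memL b cs = true := memL_of_mem_node hb (by
      rcases mem_node_cases hc with rfl | h1
      · omega
      · have := hwf.2.1 c ((memL_iff c cs).1 h1); omega)
    by_cases hcr : c = r
    · subst hcr
      rcases le_or_gt (idxOf a cs) (idxOf b cs) with h | h
      · right; rw [card_root, card_root]; omega
      · left
        rw [card, if_neg (by omega : c ≠ b)]
        exact cardL_of_idx_gt haL hbL h
    · have hcL : memL c cs = true := memL_of_mem_node hc hcr
      have hclt : c < r := hwf.2.1 c ((memL_iff c cs).1 hcL)
      rw [card, if_neg (by omega : r ≠ b), card, if_neg (fun h => hcr h.symm),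
        card, if_neg (fun h => hcr h.symm)]
      rcases lt_trichotomy (idxOf a cs) (idxOf b cs) with h | h | h
      · right
        rcases lt_trichotomy (idxOf a cs) (idxOf c cs) with h2 | h2 | h2
        · rw [cardL_of_idx_lt haL hcL h2]; omega
        · obtain ⟨t, ht, hat, hct⟩ := exists_mem_both_of_idx_eq haL hcL h2
          rw [cardL_lift (nd_node hnd).2 ht hct hat,
            cardL_of_idx_gt hbL hcL (by omega)]
          exact card_bound (wfL_of_mem hwf.2.2 ht) (by omega) hat
        · rw [cardL_of_idx_gt haL hcL h2, cardL_of_idx_gt hbL hcL (by omega)]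
      · rcases lt_trichotomy (idxOf b cs) (idxOf c cs) with h2 | h2 | h2
        · right
          rw [cardL_of_idx_lt haL hcL (by omega), cardL_of_idx_lt hbL hcL h2]
        · obtain ⟨t, ht, hat, hbt, hct⟩ :=
            shared_child (nd_node hnd).2 haL hbL hcL h h2
          rw [cardL_lift (nd_node hnd).2 ht hbt hat,
            cardL_lift (nd_node hnd).2 ht hct hbt,
            cardL_lift (nd_node hnd).2 ht hct hat]
          exact card_planar (wfL_of_mem hwf.2.2 ht) (nd_of_mem (nd_node hnd).2 ht)
            hat hbt hct hab hbc
        · right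
          rw [cardL_of_idx_gt haL hcL (by omega), cardL_of_idx_gt hbL hcL h2]
      · left
        exact cardL_of_idx_gt haL hbL h

end STree
namespace STree

theorem mem_idx_getElem {x : ℕ} : ∀ {cs : List STree} (h : memL x cs = true),
    mem x (cs[idxOf x cs]'(idxOf_lt_length h)) = true := by
  intro cs
  induction cs with
  | nil => intro h; simp [memL] at h
  | cons t ts ih =>
    intro h
    rcases Bool.eq_false_or_eq_true (mem x t) with h1 | h1
    · simp only [idxOf_pos h1, List.getElem_cons_zero]
      exact h1
    · have h2 : memL x ts = true := by
        rw [memL_cons] at h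
        rcases h with h | h
        · rw [h] at h1; cases h1
        · exact h
      simp only [idxOf_neg h1, List.getElem_cons_succ]
      exact ih h2

theorem idx_eq_of_mem_getElem {x : ℕ} : ∀ {cs : List STree}, NDL cs →
    ∀ {i : ℕ} (hi : i < cs.length), mem x (cs[i]'hi) = true → idxOf x cs = i := by
  intro cs
  induction cs with
  | nil => intro _ i hi; simp at hi
  | cons t ts ih =>
    intro hnd i hi hx
    obtain ⟨_, hnd', hdisj⟩ := ndL_cons hnd
    cases i with
    | zero =>
      simp only [List.getElem_cons_zero] at hx
      rw [idxOf_pos hx]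
    | succ j =>
      simp only [List.getElem_cons_succ] at hx
      have h1 : mem x t = false := by
        rcases Bool.eq_false_or_eq_true (mem x t) with h1 | h1
        · have := hdisj x h1
          rw [memL_of_mem (List.getElem_mem _) hx] at this
          cases this
        · exact h1
      rw [idxOf_neg h1, ih hnd' _ hx]

theorem bool_eq_of_iff {a b : Bool} (h : a = true ↔ b = true) : a = b := by
  cases a <;> cases b <;> simp_all

theorem card_inj {s : ℕ → ℕ} : ∀ {T T' : STree}, wf s T → wf s T' → ND T →
    ND T' → (∀ x, mem x T = mem x T') →
    (∀ y x, x < y → mem x T = true → mem y T = true →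
      card s y x T = card s y x T') →
    T = T'
  | .leaf, .leaf => by intros; rfl
  | .leaf, .node r' cs' => by
    intro _ _ _ _ hmem _
    have := hmem r'
    rw [mem] at this
    simp [mem_root] at this
  | .node r cs, .leaf => by
    intro _ _ _ _ hmem _
    have := hmem r
    rw [mem_root] at this
    simp [mem] at this
  | .node r cs, .node r' cs' => by
    intro hwf hwf' hnd hnd' hmem hcard
    have hr : r = r' := by
      have h1 := hmem r
      rw [mem_root] at h1
      have h2 := hmem r'
      rw [mem_root] at h2
      rcases mem_node_cases h1.symm with h | h
      · exact h
      · exfalso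
        rw [wf] at hwf hwf'
        have hlt := hwf'.2.1 r ((memL_iff r cs').1 h)
        rcases mem_node_cases h2 with h' | h'
        · omega
        · have := hwf.2.1 r' ((memL_iff r' cs).1 h')
          omega
    subst hr
    rw [wf] at hwf hwf'
    have hlen : cs.length = cs'.length := by rw [hwf.1, hwf'.1]
    have key : ∀ (i : ℕ) (hi : i < cs.length) (hi' : i < cs'.length) (x : ℕ),
        mem x (cs[i]'hi) = true → mem x (cs'[i]'hi') = true := by
      intro i hi hi' x hx
      have hxL : memL x cs = true := memL_of_mem (List.getElem_mem _) hx
      have hxr : x < r := hwf.2.1 x ((memL_iff x cs).1 hxL)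
      have hxT' : mem x (STree.node r cs') = true := by
        rw [← hmem x, mem, Bool.or_eq_true]
        exact Or.inr hxL
      have hxL' : memL x cs' = true := memL_of_mem_node hxT' (by omega)
      have hidx : idxOf x cs = i := idx_eq_of_mem_getElem (nd_node hnd).2 hi hx
      have hcardx := hcard r x hxr (by rw [mem, Bool.or_eq_true]; exact Or.inr hxL)
        mem_root
      rw [card_root, card_root] at hcardx
      have hidx' : idxOf x cs' = i := by omega
      have h2 := mem_idx_getElem hxL'
      have h3 : cs'[idxOf x cs']'(idxOf_lt_length hxL') = cs'[i]'hi' := by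
        congr 1
      rw [h3] at h2
      exact h2
    have key' : ∀ (i : ℕ) (hi : i < cs.length) (hi' : i < cs'.length) (x : ℕ),
        mem x (cs'[i]'hi') = true → mem x (cs[i]'hi) = true := by
      intro i hi hi' x hx
      have hxL' : memL x cs' = true := memL_of_mem (List.getElem_mem _) hx
      have hxr : x < r := hwf'.2.1 x ((memL_iff x cs').1 hxL')
      have hxT : mem x (STree.node r cs) = true := by
        rw [hmem x, mem, Bool.or_eq_true]
        exact Or.inr hxL'
      have hxL : memL x cs = true := memL_of_mem_node hxT (by omega)
      have hidx' : idxOf x cs' = i := idx_eq_of_mem_getElem (nd_node hnd').2 hi' hx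
      have hcardx := hcard r x hxr (by rw [mem, Bool.or_eq_true]; exact Or.inr hxL)
        mem_root
      rw [card_root, card_root] at hcardx
      have hidx : idxOf x cs = i := by omega
      have h2 := mem_idx_getElem hxL
      have h3 : cs[idxOf x cs]'(idxOf_lt_length hxL) = cs[i]'hi := by
        congr 1
      rw [h3] at h2
      exact h2
    have hchild : ∀ (i : ℕ) (hi : i < cs.length) (hi' : i < cs'.length),
        cs[i]'hi = cs'[i]'hi' := by
      intro i hi hi'
      have hwfc := wfL_of_mem hwf.2.2 (List.getElem_mem hi)
      have hwfc' := wfL_of_mem hwf'.2.2 (List.getElem_mem hi')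
      have hndc := nd_of_mem (nd_node hnd).2 (List.getElem_mem hi)
      have hndc' := nd_of_mem (nd_node hnd').2 (List.getElem_mem hi')
      refine card_inj hwfc hwfc' hndc hndc' ?_ ?_
      · intro x
        exact bool_eq_of_iff ⟨key i hi hi' x, key' i hi hi' x⟩
      · intro y x hxy hx hy
        have hyr : y < r := hwf.2.1 y ((memL_iff y cs).1
          (memL_of_mem (List.getElem_mem _) hy))
        have e1 : card s y x (STree.node r cs) = card s y x (cs[i]'hi) := by
          rw [card, if_neg (by omega : r ≠ y)]
          exact cardL_lift (nd_node hnd).2 (List.getElem_mem _) hy hx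
        have e2 : card s y x (STree.node r cs') = card s y x (cs'[i]'hi') := by
          rw [card, if_neg (by omega : r ≠ y)]
          exact cardL_lift (nd_node hnd').2 (List.getElem_mem _)
            (key i hi hi' y hy) (key i hi hi' x hx)
        rw [← e1, ← e2]
        exact hcard y x hxy
          (by rw [mem, Bool.or_eq_true];
              exact Or.inr (memL_of_mem (List.getElem_mem _) hx))
          (by rw [mem, Bool.or_eq_true];
              exact Or.inr (memL_of_mem (List.getElem_mem _) hy))
    have : cs = cs' := List.ext_getElem hlen (fun i h1 h2 => hchild i h1 h2)
    rw [this]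
termination_by T _ => sizeOf T
decreasing_by
  simp only [STree.node.sizeOf_spec]
  have h := List.sizeOf_lt_of_mem (List.getElem_mem hi)
  omega

end STree
namespace STree

variable {n : ℕ} {s : ℕ → ℕ} {T : STree}

theorem sdec_mem (hT : IsSDecreasingTree n s T) {x : ℕ} :
    mem x T = true ↔ 1 ≤ x ∧ x ≤ n := by
  rw [mem_iff, hT.2.mem_iff, List.mem_range'_1]
  omega

theorem sdec_nd (hT : IsSDecreasingTree n s T) : ND T := by
  exact hT.2.nodup_iff.2 List.nodup_range'

theorem treeInv_guard {y x : ℕ} (h : ¬(1 ≤ x ∧ x < y ∧ y ≤ n)) :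
    treeInv n s T y x = 0 := by
  rw [treeInv, if_neg h]

theorem treeInv_eq_card {y x : ℕ} (h : 1 ≤ x ∧ x < y ∧ y ≤ n) :
    treeInv n s T y x = card s y x T := by
  rw [treeInv, if_pos h]

theorem treeInv_bound (hT : IsSDecreasingTree n s T) (y x : ℕ) :
    treeInv n s T y x ≤ s y := by
  rw [treeInv]
  split
  · rename_i h
    exact card_bound hT.1 h.2.1 ((sdec_mem hT).2 ⟨h.1, by omega⟩)
  · omega

theorem treeInv_trans (hT : IsSDecreasingTree n s T) {a b c : ℕ} (hab : a < b)
    (hbc : b < c) :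
    treeInv n s T b a = 0 ∨ treeInv n s T c b ≤ treeInv n s T c a := by
  by_cases h1 : 1 ≤ a ∧ a < b ∧ b ≤ n
  · by_cases h2 : c ≤ n
    · rw [treeInv_eq_card h1, treeInv_eq_card ⟨by omega, hbc, h2⟩,
        treeInv_eq_card ⟨h1.1, by omega, h2⟩]
      exact card_trans hT.1 (sdec_nd hT) ((sdec_mem hT).2 ⟨h1.1, by omega⟩)
        ((sdec_mem hT).2 ⟨by omega, by omega⟩)
        ((sdec_mem hT).2 ⟨by omega, h2⟩) hab hbc
    · right
      rw [treeInv_guard (by omega)]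
      omega
  · left
    exact treeInv_guard h1

theorem treeInv_planar (hT : IsSDecreasingTree n s T) {a b c : ℕ} (hab : a < b)
    (hbc : b < c) :
    treeInv n s T b a = s b ∨ treeInv n s T c a ≤ treeInv n s T c b := by
  by_cases h1 : 1 ≤ a ∧ a < c ∧ c ≤ n
  · by_cases h2 : b ≤ n
    · rw [treeInv_eq_card h1, treeInv_eq_card ⟨h1.1, hab, h2⟩,
        treeInv_eq_card ⟨by omega, hbc, h1.2.2⟩]
      exact card_planar hT.1 (sdec_nd hT) ((sdec_mem hT).2 ⟨h1.1, by omega⟩)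
        ((sdec_mem hT).2 ⟨by omega, h2⟩)
        ((sdec_mem hT).2 ⟨by omega, h1.2.2⟩) hab hbc
    · right
      rw [treeInv_guard (fun hh => h2 (by omega))]
      omega
  · right
    rw [treeInv_guard (fun hh => h1 ⟨hh.1, by omega, by omega⟩)]
    omega

theorem treeInv_strict_guard {T' : STree} {y x : ℕ}
    (h : treeInv n s T y x < treeInv n s T' y x) : 1 ≤ x ∧ x < y ∧ y ≤ n := by
  by_contra hg
  rw [treeInv_guard hg, treeInv_guard hg] at h
  omega

theorem treeInv_inj {T' : STree} (hT : IsSDecreasingTree n s T)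
    (hT' : IsSDecreasingTree n s T') (h : ∀ y x, treeInv n s T y x = treeInv n s T' y x) :
    T = T' := by
  refine card_inj hT.1 hT'.1 (sdec_nd hT) (sdec_nd hT') ?_ ?_
  · intro x
    exact bool_eq_of_iff (by rw [sdec_mem hT, sdec_mem hT'])
  · intro y x hxy hx hy
    have hx' := (sdec_mem hT).1 hx
    have hy' := (sdec_mem hT).1 hy
    have := h y x
    rw [treeInv_eq_card ⟨hx'.1, hxy, hy'.2⟩, treeInv_eq_card ⟨hx'.1, hxy, hy'.2⟩] at this
    exact this

end STree
open STree in
/-- If `T ≺ T'` in the `s`-weak order, then there is a tree-ascent `(a,c)` of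
`T` whose cardinality increases in `T'`. -/
theorem exists_increasing_treeAscent (n : ℕ) (s : ℕ → ℕ) (T T' : STree)
    (hT : IsSDecreasingTree n s T) (hT' : IsSDecreasingTree n s T')
    (hle : sWeakLE n s T T') (hne : T ≠ T') :
    ∃ a c : ℕ, IsTreeAscent s T a c ∧
      treeInv n s T c a < treeInv n s T' c a := by
  classical
  have hle' : ∀ y x, treeInv n s T y x ≤ treeInv n s T' y x := hle
  have hwf := hT.1
  have hnd := sdec_nd hT
  -- a strictly increasing entry exists
  have hstrict : ∃ y x, treeInv n s T y x < treeInv n s T' y x := by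
    by_contra h
    push_neg at h
    exact hne (treeInv_inj hT hT' (fun y x => le_antisymm (hle' y x) (h y x)))
  obtain ⟨y₀, x₀, hyx⟩ := hstrict
  set P : ℕ → Prop := fun c => ∃ x, treeInv n s T c x < treeInv n s T' c x with hP
  have hy0n : y₀ ≤ n := (treeInv_strict_guard hyx).2.2
  set c₀ := Nat.findGreatest P n with hc0
  have hPc0 : P c₀ := Nat.findGreatest_spec hy0n ⟨x₀, hyx⟩
  have hrow : ∀ d, c₀ < d → ∀ x, treeInv n s T d x = treeInv n s T' d x := by
    intro d hd x
    refine le_antisymm (hle' d x) ?_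
    by_contra h
    push_neg at h
    have hPd : P d := ⟨x, h⟩
    by_cases hdn : d ≤ n
    · exact Nat.findGreatest_is_greatest hd hdn hPd
    · have := treeInv_strict_guard h
      omega
  obtain ⟨xw, hxw⟩ := hPc0
  set Q : ℕ → Prop := fun x => treeInv n s T c₀ x < treeInv n s T' c₀ x with hQ
  have hxwc : xw ≤ c₀ := by have := treeInv_strict_guard hxw; omega
  set a₀ := Nat.findGreatest Q c₀ with ha0
  have hQa0 : Q a₀ := Nat.findGreatest_spec hxwc hxw
  have hg := treeInv_strict_guard hQa0
  -- a₀ is below c₀ in T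
  have hdesc0 : descIn c₀ a₀ T = true := by
    rcases Bool.eq_false_or_eq_true (descIn c₀ a₀ T) with h | h
    · exact h
    exfalso
    obtain ⟨d, hdc, hdmem, hdne⟩ := sep hwf hnd ((sdec_mem hT).2 ⟨hg.1, by omega⟩)
      ((sdec_mem hT).2 ⟨by omega, hg.2.2⟩) hg.2.1 h
    have hdn : d ≤ n := ((sdec_mem hT).1 hdmem).2
    have e1 : treeInv n s T d a₀ = card s d a₀ T :=
      treeInv_eq_card ⟨hg.1, by omega, hdn⟩
    have e2 : treeInv n s T d c₀ = card s d c₀ T :=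
      treeInv_eq_card ⟨by omega, hdc, hdn⟩
    have e1' : treeInv n s T' d a₀ = card s d a₀ T' :=
      treeInv_eq_card ⟨hg.1, by omega, hdn⟩
    have e2' : treeInv n s T' d c₀ = card s d c₀ T' :=
      treeInv_eq_card ⟨by omega, hdc, hdn⟩
    have r1 := hrow d hdc a₀
    have r2 := hrow d hdc c₀
    rcases lt_or_gt_of_ne hdne with hpq | hpq
    · rcases treeInv_trans hT' hg.2.1 hdc with h0' | hle2'
      · have := hQa0
        omega
    
      · omega
    · rcases treeInv_planar hT hg.2.1 hdc with hsc | hle2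
      · have := treeInv_bound hT' c₀ a₀
        have := hQa0
        omega
      · omega
  -- good pairs: below + strictly increasing
  have hgood : ∃ c, ∃ a, descIn c a T = true ∧
      treeInv n s T c a < treeInv n s T' c a := ⟨c₀, a₀, hdesc0, hQa0⟩
  set c₁ := Nat.find hgood with hc1
  obtain ⟨aw, hawd, haws⟩ := Nat.find_spec hgood
  have hcmin : ∀ c, c < c₁ → ¬ ∃ a, descIn c a T = true ∧
      treeInv n s T c a < treeInv n s T' c a := fun c hc => Nat.find_min hgood hc
  set G : ℕ → Prop := fun a => descIn c₁ a T = true ∧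
      treeInv n s T c₁ a < treeInv n s T' c₁ a with hG
  have hawc : aw ≤ c₁ := by have := treeInv_strict_guard haws; omega
  set a₁ := Nat.findGreatest G c₁ with ha1
  have hGa1 : G a₁ := Nat.findGreatest_spec hawc ⟨hawd, haws⟩
  have hamax : ∀ x, a₁ < x → ¬ G x := by
    intro x hx
    by_cases hxc : x ≤ c₁
    · exact Nat.findGreatest_is_greatest hx hxc
    · intro hGx
      have := treeInv_strict_guard hGx.2
      omega
  have hg1 := treeInv_strict_guard hGa1.2
  -- the chain condition holds for (a₁, c₁)
  have hchain : ∀ b, a₁ < b → b < c₁ → descIn b a₁ T = true →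
      inRight b a₁ T = true := by
    intro b hb1 hb2 hba
    have hcb : descIn c₁ b T = true := descIn_comparable hwf hnd hGa1.1 hba hb2
    have hsc := same_child hwf hnd hcb hba
    have eIb : treeInv n s T c₁ b = treeInv n s T c₁ a₁ := by
      rw [treeInv_eq_card ⟨by omega, hb2, hg1.2.2⟩,
        treeInv_eq_card ⟨hg1.1, hg1.2.1, hg1.2.2⟩, hsc.2]
    have hIJb : treeInv n s T c₁ b = treeInv n s T' c₁ b := by
      refine le_antisymm (hle' c₁ b) ?_
      by_contra hlt
      push_neg at hlt
      exact hamax b hb1 ⟨hcb, hlt⟩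
    have hJba : treeInv n s T' b a₁ = s b := by
      rcases treeInv_planar hT' hb1 hb2 with h | h
      · exact h
      · have := hGa1.2
        omega
    have hIba : treeInv n s T b a₁ = s b := by
      have hub := treeInv_bound hT b a₁
      rcases lt_or_eq_of_le hub with h | h
      · exact absurd ⟨a₁, hba, by omega⟩ (hcmin b hb2)
      · exact h
    rw [treeInv_eq_card ⟨hg1.1, hb1, by omega⟩] at hIba
    exact (card_eq_s_iff hwf hnd hba).2 hIba
  -- descend along rightmost subtrees until we reach a tree-ascent
  have descend : ∀ a, descIn c₁ a T = true →
      treeInv n s T c₁ a < treeInv n s T' c₁ a →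
      (∀ b, a < b → b < c₁ → descIn b a T = true → inRight b a T = true) →
      ∃ a' c' : ℕ, IsTreeAscent s T a' c' ∧
        treeInv n s T c' a' < treeInv n s T' c' a' := by
    intro a
    induction a using Nat.strong_induction_on with
    | _ a IH =>
    intro hd hstr hch
    have hga := treeInv_strict_guard hstr
    by_cases hre : 0 < s a ∧ rightEmpty a T = false
    · obtain ⟨a', hir, hanc⟩ := lastChild_root hwf hnd
        ((sdec_mem hT).2 ⟨hga.1, by omega⟩) hre.2
      have hda' : descIn a a' T = true := inRight_descIn hir
      have ha'a : a' < a := descIn_lt hwf hda'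
      have ha'1 : 1 ≤ a' := ((sdec_mem hT).1 (desc_mem hda').2).1
      have hcs : card s a a' T = s a := (card_eq_s_iff hwf hnd hda').1 hir
      have hIaa' : treeInv n s T a a' = s a := by
        rw [treeInv_eq_card ⟨ha'1, ha'a, by omega⟩]; exact hcs
      have hJaa' : s a ≤ treeInv n s T' a a' := by
        rw [← hIaa']; exact hle' a a'
      have hdca' : descIn c₁ a' T = true := descIn_trans hwf hnd hd hda'
      have hscc := same_child hwf hnd hd hda'
      have hIeq : treeInv n s T c₁ a' = treeInv n s T c₁ a := by
        rw [treeInv_eq_card ⟨ha'1, by omega, hga.2.2⟩, treeInv_eq_card hga, hscc.2]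
      have hJle : treeInv n s T' c₁ a ≤ treeInv n s T' c₁ a' := by
        rcases treeInv_trans hT' ha'a hga.2.1 with h | h
        · have hs0 := hre.1
          omega
        · exact h
      have hstr' : treeInv n s T c₁ a' < treeInv n s T' c₁ a' := by omega
      have hch' : ∀ b, a' < b → b < c₁ → descIn b a' T = true →
          inRight b a' T = true := by
        intro b hb1 hb2 hba'
        rcases hanc b hba' with rfl | hba
        · exact hir
        · have hab : a < b := descIn_lt hwf hba
          exact inRight_sub hwf hnd (hch b hab hb2 hba) hda'
      exact IH a' ha'a hdca' hstr' hch'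
    · refine ⟨a, c₁, ⟨hga.2.1, hd, ?_, fun b hb1 hb2 => hch b hb1 hb2, ?_⟩, hstr⟩
      · rcases Bool.eq_false_or_eq_true (inRight c₁ a T) with h | h
        · exfalso
          have hceq := (card_eq_s_iff hwf hnd hd).1 h
          have hIc : treeInv n s T c₁ a = card s c₁ a T := treeInv_eq_card hga
          have := treeInv_bound hT' c₁ a
          omega
        · exact h
      · intro hsa
        rcases Bool.eq_false_or_eq_true (rightEmpty a T) with h | h
        · exact h
        · exact absurd ⟨hsa, h⟩ hre
  exact descend a₁ hGa1.1 hGa1.2 hchain
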